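/- Let p, q be natural numbers with p ≤ q and n = p + q ≥ 3, and let 𝔥 be a Lie subalgebra of so(p,q). Suppose that either (a) for every spacelike vector v ∈ ℝⁿ (i.e., vᵀη_{p,q}v > 0), every A ∈ so(p,q) with A·v = 0 belongs to 𝔥, or (b) p ≥ 1 and for every timelike vector v ∈ ℝⁿ (i.e., vᵀη_{p,q}v < 0), every A ∈ so(p,q) with A·v = 0 belongs to 𝔥. Then 𝔥 = so(p,q). -/

import Mathlib

open Matrix

attribute [local instance 100] LieRing.ofAssociativeRing

/-- The diagonal matrix `η_{p,q} = diag(-1,…,-1,1,…,1)` with `p` minus signs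
and `q` plus signs. -/
def etaPQ (p q : ℕ) : Matrix (Fin (p + q)) (Fin (p + q)) ℝ :=
  Matrix.diagonal fun i => if (i : ℕ) < p then (-1 : ℝ) else 1

/-- The Lie algebra `so(p,q)` of matrices `A` with `Aᵀη_{p,q} + η_{p,q}A = 0`. -/
def soPQ (p q : ℕ) : LieSubalgebra ℝ (Matrix (Fin (p + q)) (Fin (p + q)) ℝ) :=
  skewAdjointMatricesLieSubalgebra (etaPQ p q)

namespace Stmt16Aux

/-- The diagonal sign sequence. -/
def dd (p : ℕ) {n : ℕ} (i : Fin n) : ℝ := if (i : ℕ) < p then -1 else 1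

lemma dd_mul_self (p : ℕ) {n : ℕ} (i : Fin n) : dd p i * dd p i = 1 := by
  unfold dd; split <;> norm_num

lemma dd_eq_or (p : ℕ) {n : ℕ} (i : Fin n) : dd p i = 1 ∨ dd p i = -1 := by
  unfold dd; split <;> simp

lemma etaPQ_eq (p q : ℕ) : etaPQ p q = Matrix.diagonal (dd p) := rfl

lemma mem_soPQ_iff {p q : ℕ} {A : Matrix (Fin (p + q)) (Fin (p + q)) ℝ} :
    A ∈ soPQ p q ↔ ∀ a b, A b a * dd p b = dd p a * -A a b := by
  rw [soPQ, mem_skewAdjointMatricesLieSubalgebra, mem_skewAdjointMatricesSubmodule]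
  unfold Matrix.IsSkewAdjoint Matrix.IsAdjointPair
  rw [etaPQ_eq]
  constructor
  · intro h a b
    have := congrFun (congrFun h a) b
    simpa [Matrix.mul_diagonal, Matrix.diagonal_mul, Matrix.transpose_apply] using this
  · intro h
    ext a b
    simpa [Matrix.mul_diagonal, Matrix.diagonal_mul] using h a b

/-- The basis elements of `so(p,q)`. -/
def Bm (p : ℕ) {n : ℕ} (i j : Fin n) : Matrix (Fin n) (Fin n) ℝ :=
  Matrix.single i j (dd p i) - Matrix.single j i (dd p j)

lemma Bm_apply (p : ℕ) {n : ℕ} (i j a b : Fin n) :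
    Bm p i j a b = (if i = a ∧ j = b then dd p i else 0)
      - (if j = a ∧ i = b then dd p j else 0) := by
  simp [Bm, Matrix.single]

lemma Bm_mem (p q : ℕ) (i j : Fin (p + q)) : Bm p i j ∈ soPQ p q := by
  rw [mem_soPQ_iff]
  intro a b
  simp only [Bm_apply, ite_and]
  split_ifs <;> simp_all <;>
    nlinarith [dd_mul_self p i, dd_mul_self p j, dd_mul_self p a, dd_mul_self p b]


lemma Bm_mulVec (p : ℕ) {n : ℕ} (i j : Fin n) (v : Fin n → ℝ) (a : Fin n) :
    (Bm p i j *ᵥ v) a =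
      (if i = a then dd p i * v j else 0) - (if j = a then dd p j * v i else 0) := by
  simp only [mulVec, dotProduct, Bm_apply, sub_mul, ite_mul, zero_mul, ite_and,
    Finset.sum_sub_distrib]
  congr 1 <;> split_ifs <;> simp

lemma eta_mulVec (p q : ℕ) (v : Fin (p + q) → ℝ) (a : Fin (p + q)) :
    (etaPQ p q *ᵥ v) a = dd p a * v a := by
  rw [etaPQ_eq]; simp [mulVec_diagonal]

lemma quad_single (p q : ℕ) (k : Fin (p + q)) :
    (Pi.single k 1 : Fin (p + q) → ℝ) ⬝ᵥ (etaPQ p q) *ᵥ (Pi.single k 1) = dd p k := by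
  simp only [dotProduct, eta_mulVec]
  rw [Finset.sum_eq_single k]
  · simp
  · intro b _ hb; simp [Pi.single_apply, hb]
  · simp

lemma quad_two (p q : ℕ) (i k : Fin (p + q)) (hik : i ≠ k) :
    (fun a => (if a = i then (2:ℝ) else 0) + if a = k then 1 else 0) ⬝ᵥ
      (etaPQ p q) *ᵥ (fun a => (if a = i then (2:ℝ) else 0) + if a = k then 1 else 0)
      = 4 * dd p i + dd p k := by
  simp only [dotProduct, eta_mulVec]
  rw [Finset.sum_eq_add_of_mem i k (Finset.mem_univ i) (Finset.mem_univ k) hik]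
  · simp [hik, hik.symm]; ring
  · intro b _ hb
    simp [hb.1, hb.2]

lemma exists_third {p q : ℕ} (hn : 3 ≤ p + q) (i j : Fin (p + q)) :
    ∃ k : Fin (p + q), k ≠ i ∧ k ≠ j := by
  have h : (({i, j}ᶜ : Finset (Fin (p + q)))).Nonempty := by
    rw [← Finset.card_pos, Finset.card_compl]
    have h2 : ({i, j} : Finset (Fin (p + q))).card ≤ 2 :=
      (Finset.card_insert_le _ _).trans (by simp)
    have h3 : Fintype.card (Fin (p + q)) = p + q := Fintype.card_fin _
    omega
  obtain ⟨k, hk⟩ := h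
  simp only [Finset.mem_compl, Finset.mem_insert, Finset.mem_singleton, not_or] at hk
  exact ⟨k, hk.1, hk.2⟩

lemma aux {p q : ℕ} (𝔥 : LieSubalgebra ℝ (Matrix (Fin (p + q)) (Fin (p + q)) ℝ))
    (s : ℝ) (hs : s = 1 ∨ s = -1)
    (H : ∀ v : Fin (p + q) → ℝ, 0 < s * (v ⬝ᵥ (etaPQ p q).mulVec v) →
      ∀ A ∈ soPQ p q, A.mulVec v = 0 → A ∈ 𝔥)
    (i j k : Fin (p + q)) (hij : i ≠ j) (hki : k ≠ i) (hkj : k ≠ j)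
    (hdi : dd p i = s) : Bm p i j ∈ 𝔥 := by
  have h1 : Bm p k j ∈ 𝔥 := by
    apply H (Pi.single i 1) _ _ (Bm_mem p q k j)
    · funext a
      rw [Bm_mulVec]
      simp [Pi.single_apply, Ne.symm hij, hki]
    · rw [quad_single, hdi]
      rcases hs with h | h <;> rw [h] <;> norm_num
  have h2 : Bm p i j - (2 : ℝ) • Bm p k j ∈ 𝔥 := by
    apply H (fun a => (if a = i then (2 : ℝ) else 0) + if a = k then 1 else 0) _ _
      (sub_mem (Bm_mem p q i j) ((soPQ p q).smul_mem _ (Bm_mem p q k j)))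
    · funext a
      rw [sub_mulVec, smul_mulVec]
      simp only [Pi.sub_apply, Pi.smul_apply, Bm_mulVec, smul_eq_mul, Pi.zero_apply]
      simp only [if_neg (Ne.symm hij), if_neg (Ne.symm hkj), if_neg (Ne.symm hki),
        if_neg hki, if_pos rfl, add_zero, zero_add]
      split_ifs <;> ring
    · rw [quad_two p q i k (Ne.symm hki), hdi]
      rcases dd_eq_or p k with h | h <;> rcases hs with h' | h' <;> rw [h, h'] <;> norm_num
  have h3 := add_mem h2 (𝔥.smul_mem (2 : ℝ) h1)
  simpa using h3

lemma key {p q : ℕ} (hn : 3 ≤ p + q)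
    (𝔥 : LieSubalgebra ℝ (Matrix (Fin (p + q)) (Fin (p + q)) ℝ))
    (s : ℝ) (hs : s = 1 ∨ s = -1) (hex : ∃ m : Fin (p + q), dd p m = s)
    (H : ∀ v : Fin (p + q) → ℝ, 0 < s * (v ⬝ᵥ (etaPQ p q).mulVec v) →
      ∀ A ∈ soPQ p q, A.mulVec v = 0 → A ∈ 𝔥)
    (i j : Fin (p + q)) : Bm p i j ∈ 𝔥 := by
  by_cases hk : ∃ k, k ≠ i ∧ k ≠ j ∧ dd p k = s
  · obtain ⟨k, hki, hkj, hdk⟩ := hk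
    apply H (Pi.single k 1) _ _ (Bm_mem p q i j)
    · funext a
      rw [Bm_mulVec]
      simp [Pi.single_apply, Ne.symm hki, Ne.symm hkj]
    · rw [quad_single, hdk]
      rcases hs with h | h <;> rw [h] <;> norm_num
  · push_neg at hk
    rcases eq_or_ne i j with rfl | hij
    · have h0 : Bm p i i = 0 := sub_self _
      rw [h0]; exact zero_mem _
    · obtain ⟨m, hm⟩ := hex
      obtain ⟨k, hki, hkj⟩ := exists_third hn i j
      have hmij : m = i ∨ m = j := by
        by_contra h
        push_neg at h
        exact hk m h.1 h.2 hm
      rcases hmij with rfl | rfl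
      · exact aux 𝔥 s hs H m j k hij hki hkj hm
      · have h1 := aux 𝔥 s hs H m i k (Ne.symm hij) hkj hki hm
        have hneg : Bm p i m = -Bm p m i := (neg_sub _ _).symm
        rw [hneg]
        exact neg_mem h1

lemma sum_pair {n : ℕ} (c : Fin n → Fin n → ℝ) (a b : Fin n) :
    (∑ x, ∑ y, if x = a then if y = b then c x y else 0 else 0) = c a b := by
  rw [Finset.sum_eq_single a]
  · simp [Finset.sum_ite_eq']
  · intro x _ hx; simp [hx]
  · simp

lemma span_mem {p q : ℕ} (𝔥 : LieSubalgebra ℝ (Matrix (Fin (p + q)) (Fin (p + q)) ℝ))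
    (hB : ∀ i j : Fin (p + q), Bm p i j ∈ 𝔥)
    {A : Matrix (Fin (p + q)) (Fin (p + q)) ℝ} (hA : A ∈ soPQ p q) : A ∈ 𝔥 := by
  have hA' := mem_soPQ_iff.mp hA
  have hrep : A = (2⁻¹ : ℝ) • ∑ i, ∑ j, (dd p i * A i j) • Bm p i j := by
    ext a b
    simp only [Matrix.smul_apply, Matrix.sum_apply, Bm_apply, smul_sub, smul_ite, smul_zero,
      smul_eq_mul, ite_and, mul_sub, mul_ite, mul_zero, Finset.sum_sub_distrib,
      Finset.sum_ite_eq', Finset.mem_univ, if_true]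
    have e1 : (∑ x : Fin (p + q), ∑ y : Fin (p + q),
        if x = a then if y = b then dd p x * A x y * dd p x else 0 else 0)
        = dd p a * A a b * dd p a := sum_pair _ a b
    rw [e1]
    linear_combination (-(A a b)) * dd_mul_self p a + (2⁻¹ * dd p a) * hA' a b
  rw [hrep]
  exact 𝔥.smul_mem _ (sum_mem fun i _ => sum_mem fun j _ => 𝔥.smul_mem _ (hB i j))

end Stmt16Aux

/-- Lie-algebra form of Lemma 1 of the appendix: if a Lie
subalgebra `𝔥` of `so(p,q)` (with `p ≤ q`, `p + q ≥ 3`) contains, for every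
spacelike vector `v`, every member of `so(p,q)` annihilating `v`, or `p ≥ 1`
and `𝔥` contains, for every timelike vector `v`, every member of `so(p,q)`
annihilating `v`, then `𝔥 = so(p,q)`. -/
theorem stmt16 (p q : ℕ) (hpq : p ≤ q) (hn : 3 ≤ p + q)
    (𝔥 : LieSubalgebra ℝ (Matrix (Fin (p + q)) (Fin (p + q)) ℝ))
    (hsub : 𝔥 ≤ soPQ p q)
    (hyp :
      (∀ v : Fin (p + q) → ℝ, 0 < v ⬝ᵥ (etaPQ p q).mulVec v →
        ∀ A ∈ soPQ p q, A.mulVec v = 0 → A ∈ 𝔥) ∨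
      (1 ≤ p ∧ ∀ v : Fin (p + q) → ℝ, v ⬝ᵥ (etaPQ p q).mulVec v < 0 →
        ∀ A ∈ soPQ p q, A.mulVec v = 0 → A ∈ 𝔥)) :
    𝔥 = soPQ p q := by
  refine le_antisymm hsub fun A hA => ?_
  apply Stmt16Aux.span_mem 𝔥 ?_ hA
  intro i j
  rcases hyp with H | ⟨hp, H⟩
  · refine Stmt16Aux.key hn 𝔥 1 (Or.inl rfl) ?_ ?_ i j
    · refine ⟨⟨p + q - 1, by omega⟩, ?_⟩
      have : ¬(p + q - 1 < p) := by omega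
      simp [Stmt16Aux.dd, this]
    · intro v hv
      rw [one_mul] at hv
      exact H v hv
  · refine Stmt16Aux.key hn 𝔥 (-1) (Or.inr rfl) ?_ ?_ i j
    · refine ⟨⟨0, by omega⟩, ?_⟩
      have : (0 : ℕ) < p := hp
      simp [Stmt16Aux.dd, this]
    · intro v hv
      have hv' : v ⬝ᵥ (etaPQ p q).mulVec v < 0 := by nlinarith
      exact H v hv'
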